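/- Heap-extension (weakening) lemma for the natural semantics of λ_letrec: for heaps Ψ, Ψ', Φ with dom(Ψ') disjoint from dom(Φ), and M such that both ⟨Ψ⟩M and ⟨Ψ ∪ Ψ'⟩M are closed configurations, ⟨Ψ⟩M ⇓ ⟨Φ⟩V holds if and only if ⟨Ψ ∪ Ψ'⟩M ⇓ ⟨Φ ∪ Ψ'⟩V holds, and the two derivations have the same depth. -/

import Mathlib

/-! # The cyclic call-by-need calculus λ_letrec (and its call-by-value variant) -/

inductive RExpr : Type
  | var : ℕ → RExpr
  | lam : ℕ → RExpr → RExpr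
  | app : RExpr → RExpr → RExpr
  | letr : List (ℕ × RExpr) → RExpr → RExpr
  | bh : RExpr        -- the black hole •

abbrev Binds := List (ℕ × RExpr)

namespace RExpr

mutual
/-- free variables -/
def FVR : RExpr → Finset ℕ
  | var x => {x}
  | lam x M => FVR M \ {x}
  | app M N => FVR M ∪ FVR N
  | bh => ∅
  | letr ds M => (FVRL ds ∪ FVR M) \ (ds.map Prod.fst).toFinset
def FVRL : Binds → Finset ℕ
  | [] => ∅
  | (_, M) :: ds => FVR M ∪ FVRL ds
end

mutual
/-- `substVar M x x'` renames free occurrences of `x` in `M` to `x'`. -/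
def substVar : RExpr → ℕ → ℕ → RExpr
  | var y, x, x' => if y = x then var x' else var y
  | lam y M, x, x' => if y = x then lam y M else lam y (substVar M x x')
  | app M N, x, x' => app (substVar M x x') (substVar N x x')
  | bh, _, _ => bh
  | letr ds M, x, x' =>
      if x ∈ ds.map Prod.fst then letr ds M
      else letr (substVarL ds x x') (substVar M x x')
def substVarL : Binds → ℕ → ℕ → Binds
  | [], _, _ => []
  | (y, M) :: ds, x, x' => (y, substVar M x x') :: substVarL ds x x'
end

/-- simultaneous renaming realized by iterated renaming to fresh names -/
def renameList (prs : List (ℕ × ℕ)) (M : RExpr) : RExpr :=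
  prs.foldl (fun M p => substVar M p.1 p.2) M

def IsValR : RExpr → Prop
  | lam _ _ => True
  | bh => True
  | _ => False

inductive AnswerR : RExpr → Prop
  | lam (x M) : AnswerR (lam x M)
  | bh : AnswerR bh
  | letr (D A) : AnswerR A → AnswerR (letr D A)

/-- good answers : answers whose value part is an abstraction -/
inductive GoodR : RExpr → Prop
  | lam (x M) : GoodR (lam x M)
  | letr (D G) : GoodR G → GoodR (letr D G)

def ClosedR (M : RExpr) : Prop := FVR M = ∅

/-- purity : no black hole occurs -/
inductive Pure : RExpr → Prop
  | var (x) : Pure (var x)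
  | lam (x M) : Pure M → Pure (lam x M)
  | app (M N) : Pure M → Pure N → Pure (app M N)
  | letr (ds M) : (∀ p ∈ ds, Pure p.2) → Pure M → Pure (letr ds M)

end RExpr

open RExpr

/-! ## Evaluation contexts (shared between by-need and by-value variants) -/

mutual
inductive RCtx : Type
  | hole : RCtx
  | appL : RCtx → RExpr → RCtx                     -- E M
  | appR : RExpr → RCtx → RCtx                     -- V E (by-value only)
  | letrIn : Binds → RCtx → RCtx                   -- let rec D in E
  | letrVar : ℕ → RCtx → Binds → RCtx → RCtx       -- let rec x=E, D in E'[x]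
  | letrDep : ℕ → RCtx → DepChain → Binds → RCtx → RCtx
      -- let rec x'=E, x↝x', D in E'[x]  (x is the start of the chain)
/-- a dependency chain x ↝ x'; the final hole is filled with the target of the chain -/
inductive DepChain : Type
  | single : ℕ → RCtx → DepChain                   -- x = E[·]
  | cons : ℕ → RCtx → DepChain → DepChain          -- x = E[y], chain from y
end

namespace RCtx

/-- the first (demanded) variable of a chain -/
def chainStart : DepChain → ℕ
  | .single x _ => x
  | .cons x _ _ => x

mutual
/-- plugging an expression into a context -/
def plugC : RCtx → RExpr → RExpr
  | hole, M => M
  | appL E N, M => .app (plugC E M) N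
  | appR V E, M => .app V (plugC E M)
  | letrIn D E, M => .letr D (plugC E M)
  | letrVar x E D E', M => .letr ((x, plugC E M) :: D) (plugC E' (.var x))
  | letrDep x' E c D E', M =>
      .letr ((x', plugC E M) :: chainBindsTo c (.var x') ++ D)
        (plugC E' (.var (chainStart c)))
/-- the bindings of a dependency chain whose final hole is filled by `L` -/
def chainBindsTo : DepChain → RExpr → Binds
  | .single x E, L => [(x, plugC E L)]
  | .cons x E c, L => (x, plugC E (.var (chainStart c))) :: chainBindsTo c L
end

-- call-by-need evaluation contexts (no `appR`)
mutual
inductive Need : RCtx → Prop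
  | hole : Need hole
  | appL {E N} : Need E → Need (appL E N)
  | letrIn {D E} : Need E → Need (letrIn D E)
  | letrVar {x E D E'} : Need E → Need E' → Need (letrVar x E D E')
  | letrDep {x' E c D E'} : Need E → NeedChain c → Need E' → Need (letrDep x' E c D E')
inductive NeedChain : DepChain → Prop
  | single {x E} : Need E → NeedChain (.single x E)
  | cons {x E c} : Need E → NeedChain c → NeedChain (.cons x E c)
end

-- call-by-value evaluation contexts (`appR` restricted to values)
mutual
inductive Val : RCtx → Prop
  | hole : Val hole
  | appL {E N} : Val E → Val (appL E N)
  | appR {V E} : IsValR V → Val E → Val (appR V E)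
  | letrIn {D E} : Val E → Val (letrIn D E)
  | letrVar {x E D E'} : Val E → Val E' → Val (letrVar x E D E')
  | letrDep {x' E c D E'} : Val E → ValChain c → Val E' → Val (letrDep x' E c D E')
inductive ValChain : DepChain → Prop
  | single {x E} : Val E → ValChain (.single x E)
  | cons {x E c} : Val E → ValChain c → ValChain (.cons x E c)
end

end RCtx

open RCtx

/-! ## Reduction semantics -/

/-- the rules shared by the by-need and by-value calculi -/
inductive CRedex : RExpr → RExpr → Prop
  | lift (D A N) : AnswerR A →
      CRedex (.app (.letr D A) N) (.letr D (.app A N))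
  | deref (D₁ D₂ x V E) : IsValR V →
      CRedex (.letr (D₁ ++ (x, V) :: D₂) (plugC E (.var x)))
             (.letr (D₁ ++ (x, V) :: D₂) (plugC E V))
  | derefEnv (c x' V D E) : IsValR V →
      CRedex (.letr (chainBindsTo c (.var x') ++ (x', V) :: D)
                (plugC E (.var (chainStart c))))
             (.letr (chainBindsTo c V ++ (x', V) :: D)
                (plugC E (.var (chainStart c))))
  | assoc (x D A D' E) : AnswerR A →
      CRedex (.letr ((x, .letr D A) :: D') (plugC E (.var x)))
             (.letr (D ++ (x, A) :: D') (plugC E (.var x)))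
  | assocEnv (x' D A c D' E) : AnswerR A →
      CRedex (.letr ((x', .letr D A) :: chainBindsTo c (.var x') ++ D')
                (plugC E (.var (chainStart c))))
             (.letr (D ++ (x', A) :: chainBindsTo c (.var x') ++ D')
                (plugC E (.var (chainStart c))))
  | error (c D E) :
      CRedex (.letr (chainBindsTo c (.var (chainStart c)) ++ D)
                (plugC E (.var (chainStart c))))
             (.letr (chainBindsTo c .bh ++ D)
                (plugC E (.var (chainStart c))))
  | errorEnv (c' x' c D E) : chainStart c' = x' →
      CRedex (.letr (chainBindsTo c' (.var x') ++ chainBindsTo c (.var x') ++ D)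
                (plugC E (.var (chainStart c))))
             (.letr (chainBindsTo c' .bh ++ chainBindsTo c (.var x') ++ D)
                (plugC E (.var (chainStart c))))
  | errorBeta (M) : CRedex (.app .bh M) .bh

/-- the notion of reduction of λ_letrec -/
inductive RRedex : RExpr → RExpr → Prop
  | beta (x M N) : RRedex (.app (.lam x M) N) (.letr [(x, N)] M)
  | common {M N} : CRedex M N → RRedex M N

/-- the notion of reduction of the call-by-value variant λ_letrec^val -/
inductive VRedex : RExpr → RExpr → Prop
  | betaV (x M x' M') :
      VRedex (.app (.lam x M) (.lam x' M')) (.letr [(x, .lam x' M')] M)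
  | liftArg (V D A) : IsValR V → AnswerR A →
      VRedex (.app V (.letr D A)) (.letr D (.app V A))
  | errorArg (x M) : VRedex (.app (.lam x M) .bh) .bh
  | common {M N} : CRedex M N → VRedex M N

/-- standard (call-by-need) reduction of λ_letrec -/
def RStep (M N : RExpr) : Prop :=
  ∃ E M' N', RCtx.Need E ∧ RRedex M' N' ∧ M = plugC E M' ∧ N = plugC E N'

def RSteps : RExpr → RExpr → Prop := Relation.ReflTransGen RStep

/-- standard (call-by-value) reduction of λ_letrec^val -/
def VStep (M N : RExpr) : Prop :=
  ∃ E M' N', RCtx.Val E ∧ VRedex M' N' ∧ M = plugC E M' ∧ N = plugC E N'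

def VSteps : RExpr → RExpr → Prop := Relation.ReflTransGen VStep

/-! ## Heaps and the natural semantics -/

abbrev RHeap := Finmap (fun _ : ℕ => RExpr)

def insertList (Ψ : RHeap) (bs : Binds) : RHeap :=
  bs.foldl (fun Ψ p => Ψ.insert p.1 p.2) Ψ

def HeapClosedR (Ψ : RHeap) : Prop :=
  ∀ x M, Ψ.lookup x = some M → FVR M ⊆ Ψ.keys

def ConfigClosedR (Ψ : RHeap) (M : RExpr) : Prop :=
  HeapClosedR Ψ ∧ FVR M ⊆ Ψ.keys

/-- renaming pairs for a letrec binding group -/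
def bindRen (ds : Binds) (xs : List ℕ) : List (ℕ × ℕ) :=
  List.zip (ds.map Prod.fst) xs

/-- The depth-indexed natural semantics ⟨Ψ⟩M ⇓ ⟨Φ⟩V of λ_letrec. -/
inductive EvalR : ℕ → RHeap → RExpr → RHeap → RExpr → Prop
  | value {Ψ V} : IsValR V → EvalR 1 Ψ V Ψ V
  | app {m n Ψ M₁ M₂ Φ x N x' Ψ' V} :
      EvalR m Ψ M₁ Φ (.lam x N) →
      x' ∉ Φ.keys → x' ∉ FVR M₂ → x' ∉ FVR N →
      EvalR n (Φ.insert x' M₂) (substVar N x x') Ψ' V →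
      EvalR (max m n + 1) Ψ (.app M₁ M₂) Ψ' V
  | varr {n Ψ x M Φ V} :
      Ψ.lookup x = some M →
      EvalR n (Ψ.insert x .bh) M Φ V →
      EvalR (n + 1) Ψ (.var x) (Φ.insert x V) V
  | letr {n Ψ ds N xs Φ V} :
      xs.length = ds.length → xs.Nodup →
      (∀ x' ∈ xs, x' ∉ Ψ.keys ∧ x' ∉ FVRL ds ∧ x' ∉ FVR N ∧
        x' ∉ (ds.map Prod.fst).toFinset) →
      EvalR n
        (insertList Ψ
          (List.zip xs (ds.map fun p => renameList (bindRen ds xs) p.2)))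
        (renameList (bindRen ds xs) N) Φ V →
      EvalR (n + 1) Ψ (.letr ds N) Φ V
  | errBeta {n Ψ M₁ M₂ Φ} :
      EvalR n Ψ M₁ Φ .bh →
      EvalR (n + 1) Ψ (.app M₁ M₂) Φ .bh

/-- the natural semantics, with the derivation depth hidden -/
def EvalAny (Ψ : RHeap) (M : RExpr) (Φ : RHeap) (V : RExpr) : Prop :=
  ∃ n, EvalR n Ψ M Φ V

/-! ## Nestings of letrec's Θ ::= [] | Θ[let rec D in []] -/

/-- a nesting of letrec's; the head is the innermost group -/
abbrev LetrNest := List Binds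

def rtplug : LetrNest → RExpr → RExpr
  | [], M => M
  | D :: Θ, M => rtplug Θ (.letr D M)

/-- ⌊Θ⌋ : the heap collecting all bindings of Θ -/
def rtheap (Θ : LetrNest) : RHeap := insertList ∅ Θ.flatten

/-! ## α-equivalence for λ_letrec -/

inductive AlphaEqR : RExpr → RExpr → Prop
  | var (x) : AlphaEqR (.var x) (.var x)
  | bh : AlphaEqR .bh .bh
  | app {M M' N N'} : AlphaEqR M M' → AlphaEqR N N' → AlphaEqR (.app M N) (.app M' N')
  | lam {x y M N} :
      (∀ z, z ∉ FVR M ∪ FVR N ∪ {x, y} → AlphaEqR (substVar M x z) (substVar N y z)) →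
      AlphaEqR (.lam x M) (.lam y N)
  | letr {ds ds' M M'} :
      ds.length = ds'.length →
      (∀ zs : List ℕ, zs.length = ds.length → zs.Nodup →
        (∀ z ∈ zs, z ∉ FVR (.letr ds M) ∪ FVR (.letr ds' M') ∪
          (ds.map Prod.fst).toFinset ∪ (ds'.map Prod.fst).toFinset) →
        AlphaEqR (renameList (bindRen ds zs) M) (renameList (bindRen ds' zs) M')) →
      (∀ zs : List ℕ, zs.length = ds.length → zs.Nodup →
        (∀ z ∈ zs, z ∉ FVR (.letr ds M) ∪ FVR (.letr ds' M') ∪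
          (ds.map Prod.fst).toFinset ∪ (ds'.map Prod.fst).toFinset) →
        ∀ (i : ℕ) (h : i < ds.length) (h' : i < ds'.length),
          AlphaEqR (renameList (bindRen ds zs) (ds.get ⟨i, h⟩).2)
                   (renameList (bindRen ds' zs) (ds'.get ⟨i, h'⟩).2)) →
      AlphaEqR (.letr ds M) (.letr ds' M')


/-! ## Auxiliary lemmas for heap weakening -/

section WeakenAux

open RExpr Finmap

theorem substVarL_map_fst (ds : Binds) (x x' : ℕ) :
    (substVarL ds x x').map Prod.fst = ds.map Prod.fst := by
  induction ds with
  | nil => rfl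
  | cons p ds ih => cases p; simp [substVarL, ih]

mutual
theorem FVR_substVar_subset : ∀ (M : RExpr) (x x' : ℕ),
    FVR (substVar M x x') ⊆ (FVR M \ {x}) ∪ {x'}
  | .var y, x, x' => by
      by_cases h : y = x <;> simp [substVar, FVR, h]
  | .lam y M, x, x' => by
      by_cases h : y = x
      · subst h
        intro a ha
        simp [substVar, FVR] at ha ⊢
        tauto
      · intro a ha
        simp [substVar, FVR, h] at ha ⊢
        obtain ⟨h1, h2⟩ := ha
        have := FVR_substVar_subset M x x' h1
        simp at this
        tauto
  | .app M N, x, x' => by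
      intro a ha
      simp [substVar, FVR] at ha ⊢
      rcases ha with h | h
      · have := FVR_substVar_subset M x x' h; simp at this; tauto
      · have := FVR_substVar_subset N x x' h; simp at this; tauto
  | .bh, x, x' => by simp [substVar, FVR]
  | .letr ds M, x, x' => by
      by_cases h : x ∈ ds.map Prod.fst
      · intro a ha
        simp [substVar, FVR, h] at ha ⊢
        have hx : a ≠ x := by
          rintro rfl
          obtain ⟨b, hb⟩ := List.mem_map.mp h
          exact ha.2 b.2 (by rw [← hb.2]; exact hb.1)
        tauto
      · intro a ha
        simp [substVar, FVR, h, substVarL_map_fst] at ha ⊢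
        obtain ⟨h1, h2⟩ := ha
        rcases h1 with h1 | h1
        · have := FVRL_substVarL_subset ds x x' h1; simp at this; tauto
        · have := FVR_substVar_subset M x x' h1; simp at this; tauto
theorem FVRL_substVarL_subset : ∀ (ds : Binds) (x x' : ℕ),
    FVRL (substVarL ds x x') ⊆ (FVRL ds \ {x}) ∪ {x'}
  | [], x, x' => by simp [substVarL, FVRL]
  | (y, M) :: ds, x, x' => by
      intro a ha
      simp [substVarL, FVRL] at ha ⊢
      rcases ha with h | h
      · have := FVR_substVar_subset M x x' h; simp at this; tauto
      · have := FVRL_substVarL_subset ds x x' h; simp at this; tauto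
end


theorem renameList_cons (p : ℕ × ℕ) (prs : List (ℕ × ℕ)) (M : RExpr) :
    renameList (p :: prs) M = renameList prs (substVar M p.1 p.2) := rfl

theorem FVR_renameList_subset : ∀ (prs : List (ℕ × ℕ)) (M : RExpr),
    (∀ p ∈ prs, ∀ q ∈ prs, p.2 ≠ q.1) →
    FVR (renameList prs M) ⊆
      (FVR M \ (prs.map Prod.fst).toFinset) ∪ (prs.map Prod.snd).toFinset := by
  intro prs
  induction prs with
  | nil => intro M _; simp [renameList]
  | cons p prs ih =>
      intro M hp a ha
      rw [renameList_cons] at ha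
      have h1 := ih (substVar M p.1 p.2)
        (fun q hq r hr => hp q (List.mem_cons_of_mem _ hq) r (List.mem_cons_of_mem _ hr)) ha
      simp at h1 ⊢
      rcases h1 with ⟨h1, h2⟩ | h1
      · have := FVR_substVar_subset M p.1 p.2 h1
        simp at this
        rw [or_comm] at this
        rcases this with ⟨h3, h4⟩ | h3
        · tauto
        · subst h3
          have : p.2 ∉ List.map Prod.fst prs := by
            intro hmem
            obtain ⟨q, hq, hq2⟩ := List.mem_map.mp hmem
            exact hp p (List.mem_cons_self) q (List.mem_cons_of_mem _ hq) hq2.symm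
          tauto
      · tauto

theorem mem_FVRL_of_mem : ∀ (ds : Binds) (p : ℕ × RExpr), p ∈ ds → FVR p.2 ⊆ FVRL ds := by
  intro ds
  induction ds with
  | nil => simp
  | cons q ds ih =>
      rintro p hp a ha
      obtain ⟨y, N⟩ := q
      simp [FVRL]
      rcases List.mem_cons.mp hp with h | h
      · subst h; exact Or.inl ha
      · exact Or.inr (ih p h ha)

/-! ### Finmap helpers -/

theorem insertList_cons (Ψ : RHeap) (p : ℕ × RExpr) (bs : Binds) :
    insertList Ψ (p :: bs) = insertList (Ψ.insert p.1 p.2) bs := rfl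

theorem mem_insertList : ∀ (bs : Binds) (Ψ : RHeap) (x : ℕ),
    x ∈ insertList Ψ bs ↔ x ∈ Ψ ∨ x ∈ bs.map Prod.fst := by
  intro bs
  induction bs with
  | nil => simp [insertList]
  | cons p bs ih =>
      intro Ψ x
      rw [insertList_cons, ih]
      simp [Finmap.mem_insert]
      tauto

theorem lookup_insertList : ∀ (bs : Binds) (Ψ : RHeap) (x : ℕ) (M : RExpr),
    (insertList Ψ bs).lookup x = some M → Ψ.lookup x = some M ∨ (x, M) ∈ bs := by
  intro bs
  induction bs with
  | nil => intro Ψ x M h; exact Or.inl h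
  | cons p bs ih =>
      intro Ψ x M h
      rw [insertList_cons] at h
      rcases ih _ _ _ h with h | h
      · by_cases hx : x = p.1
        · subst hx
          rw [Finmap.lookup_insert] at h
          right; injection h with h; subst h; simp
        · rw [Finmap.lookup_insert_of_ne _ hx] at h
          exact Or.inl h
      · exact Or.inr (List.mem_cons_of_mem _ h)

theorem insertList_union : ∀ (bs : Binds) (s t : RHeap),
    insertList (s ∪ t) bs = insertList s bs ∪ t := by
  intro bs
  induction bs with
  | nil => intro s t; rfl
  | cons p bs ih =>
      intro s t
      rw [insertList_cons, insertList_cons, Finmap.insert_union, ih]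

theorem keys_subset_insert (Ψ : RHeap) (a : ℕ) (v : RExpr) :
    Ψ.keys ⊆ (Ψ.insert a v).keys := fun x hx =>
  Finmap.mem_keys.mpr (Finmap.mem_insert.mpr (Or.inr (Finmap.mem_keys.mp hx)))

theorem mem_keys_insert_self (Ψ : RHeap) (a : ℕ) (v : RExpr) :
    a ∈ (Ψ.insert a v).keys :=
  Finmap.mem_keys.mpr (Finmap.mem_insert.mpr (Or.inl rfl))

theorem keys_subset_insertList (Ψ : RHeap) (bs : Binds) :
    Ψ.keys ⊆ (insertList Ψ bs).keys := fun x hx =>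
  Finmap.mem_keys.mpr ((mem_insertList bs Ψ x).mpr (Or.inl (Finmap.mem_keys.mp hx)))

/-! ### Key monotonicity of evaluation -/

theorem EvalR.keys_mono {n : ℕ} {Ψ : RHeap} {M : RExpr} {Φ : RHeap} {V : RExpr}
    (h : EvalR n Ψ M Φ V) : Ψ.keys ⊆ Φ.keys := by
  induction h with
  | value _ => exact Finset.Subset.refl _
  | app _ _ _ _ _ ih1 ih2 =>
      exact ih1.trans ((keys_subset_insert _ _ _).trans ih2)
  | varr hlook _ ih =>
      exact ((keys_subset_insert _ _ _).trans ih).trans (keys_subset_insert _ _ _)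
  | letr _ _ _ _ ih => exact (keys_subset_insertList _ _).trans ih
  | errBeta _ ih => exact ih

theorem union_right_cancel {Φ Φ' Ψ' : RHeap}
    (h1 : Ψ'.Disjoint Φ) (h2 : Ψ'.Disjoint Φ')
    (h : Φ ∪ Ψ' = Φ' ∪ Ψ') : Φ = Φ' := by
  apply Finmap.ext_lookup
  intro x
  by_cases hx : x ∈ Ψ'
  · rw [Finmap.lookup_eq_none.mpr (fun hc => h1 x hx hc),
      Finmap.lookup_eq_none.mpr (fun hc => h2 x hx hc)]
  · by_cases hΦ : x ∈ Φ <;> by_cases hΦ' : x ∈ Φ'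
    · have := congrArg (Finmap.lookup x) h
      rwa [Finmap.lookup_union_left hΦ, Finmap.lookup_union_left hΦ'] at this
    · have := congrArg (Finmap.lookup x) h
      rw [Finmap.lookup_union_left hΦ, Finmap.lookup_union_right hΦ',
        Finmap.lookup_eq_none.mpr hx] at this
      rw [this, Finmap.lookup_eq_none.mpr hΦ']
    · have := congrArg (Finmap.lookup x) h
      rw [Finmap.lookup_union_right hΦ, Finmap.lookup_union_left hΦ',
        Finmap.lookup_eq_none.mpr hx] at this
      rw [← this, Finmap.lookup_eq_none.mpr hΦ]
    · rw [Finmap.lookup_eq_none.mpr hΦ, Finmap.lookup_eq_none.mpr hΦ']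


theorem EvalR.weaken (Ψ' : RHeap) {n : ℕ} {Ψ : RHeap} {M : RExpr} {Φ : RHeap} {V : RExpr}
    (h : EvalR n Ψ M Φ V) : Ψ'.Disjoint Φ → EvalR n (Ψ ∪ Ψ') M (Φ ∪ Ψ') V := by
  induction h with
  | value hV => exact fun _ => EvalR.value hV
  | @app m k Ψ M₁ M₂ Φ₀ x N x' Ψf V h1 hx1 hx2 hx3 h2 ih1 ih2 =>
      intro hd
      have hx'f : x' ∈ Ψf := Finmap.mem_keys.mp (h2.keys_mono (mem_keys_insert_self Φ₀ x' M₂))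
      have hd0 : Ψ'.Disjoint Φ₀ := fun a ha hmem =>
        hd a ha (Finmap.mem_keys.mp (h2.keys_mono
          (Finmap.mem_keys.mpr (Finmap.mem_insert.mpr (Or.inr hmem)))))
      have e1 := ih1 hd0
      have e2 := ih2 hd
      rw [← Finmap.insert_union] at e2
      refine EvalR.app e1 ?_ hx2 hx3 e2
      intro hcontra
      rcases Finmap.mem_union.mp (Finmap.mem_keys.mp hcontra) with hm | hm
      · exact hx1 (Finmap.mem_keys.mpr hm)
      · exact hd x' hm hx'f
  | @varr k Ψ x M Φ V hlook h ih =>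
      intro hd
      have hxΨ : x ∈ Ψ := by
        by_contra h'
        rw [Finmap.lookup_eq_none.mpr h'] at hlook
        cases hlook
      have hdΦ : Ψ'.Disjoint Φ := fun a ha hmem =>
        hd a ha (Finmap.mem_insert.mpr (Or.inr hmem))
      have e := ih hdΦ
      rw [← Finmap.insert_union] at e
      have := EvalR.varr (Ψ := Ψ ∪ Ψ')
        (by rw [Finmap.lookup_union_left hxΨ]; exact hlook) e
      rwa [Finmap.insert_union] at this
  | @letr k Ψ ds N xs Φ V hlen hnd hfresh h ih =>
      intro hd
      have e := ih hd
      rw [← insertList_union] at e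
      have hmapfst : (List.zip xs (ds.map fun p => renameList (bindRen ds xs) p.2)).map
          Prod.fst = xs := List.map_fst_zip (by simp [hlen])
      have hin : ∀ x' ∈ xs, x' ∈ Φ := by
        intro x' hx'
        refine Finmap.mem_keys.mp (h.keys_mono (Finmap.mem_keys.mpr ?_))
        rw [mem_insertList]
        right; rw [hmapfst]; exact hx'
      refine EvalR.letr hlen hnd ?_ e
      intro x' hx'
      obtain ⟨ha, hb, hc2, hd2⟩ := hfresh x' hx'
      refine ⟨?_, hb, hc2, hd2⟩
      intro hmem
      rcases Finmap.mem_union.mp (Finmap.mem_keys.mp hmem) with hm | hm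
      · exact ha (Finmap.mem_keys.mpr hm)
      · exact hd x' hm (hin x' hx')
  | errBeta h ih => exact fun hd => EvalR.errBeta (ih hd)


theorem FVR_app_subset {M₁ M₂ : RExpr} {k : Finset ℕ} (h : FVR (.app M₁ M₂) ⊆ k) :
    FVR M₁ ⊆ k ∧ FVR M₂ ⊆ k := by
  rw [show FVR (.app M₁ M₂) = FVR M₁ ∪ FVR M₂ from rfl, Finset.union_subset_iff] at h
  exact h

theorem EvalR.strengthen (Ψ' : RHeap) {n : ℕ} {Θ : RHeap} {M : RExpr} {Θ' : RHeap} {V : RExpr}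
    (h : EvalR n Θ M Θ' V) :
    ∀ Ψ : RHeap, Θ = Ψ ∪ Ψ' → Ψ'.Disjoint Ψ → ConfigClosedR Ψ M →
      ∃ Φ : RHeap, Θ' = Φ ∪ Ψ' ∧ Ψ'.Disjoint Φ ∧ ConfigClosedR Φ V ∧ EvalR n Ψ M Φ V := by
  induction h with
  | value hV =>
      intro Ψ hΘ hd hc
      exact ⟨Ψ, hΘ, hd, hc, EvalR.value hV⟩
  | @app m k Θ M₁ M₂ Θ₀ x N x' Θf V h1 hx1 hx2 hx3 h2 ih1 ih2 =>
      intro Ψ hΘ hd hc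
      subst hΘ
      have hFV := FVR_app_subset hc.2
      obtain ⟨Φ₀, rfl, hd0, hc0, e1⟩ := ih1 Ψ rfl hd ⟨hc.1, hFV.1⟩
      have hx'Ψ' : x' ∉ Ψ' := fun hm =>
        hx1 (Finmap.mem_keys.mpr (Finmap.mem_union.mpr (Or.inr hm)))
      have hx'Φ₀ : x' ∉ Φ₀.keys := fun hm =>
        hx1 (Finmap.mem_keys.mpr (Finmap.mem_union.mpr (Or.inl (Finmap.mem_keys.mp hm))))
      have hkeys : Ψ.keys ⊆ Φ₀.keys := e1.keys_mono
      have hd0' : Ψ'.Disjoint (Φ₀.insert x' M₂) := by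
        intro a ha hmem
        rcases Finmap.mem_insert.mp hmem with rfl | hmem
        · exact hx'Ψ' ha
        · exact hd0 a ha hmem
      have hcc : ConfigClosedR (Φ₀.insert x' M₂) (substVar N x x') := by
        constructor
        · intro y My hy
          by_cases hyx : y = x'
          · subst hyx
            rw [Finmap.lookup_insert] at hy
            injection hy with hy
            subst hy
            exact (hFV.2.trans hkeys).trans (keys_subset_insert _ _ _)
          · rw [Finmap.lookup_insert_of_ne _ hyx] at hy
            exact (hc0.1 y My hy).trans (keys_subset_insert _ _ _)
        · intro a ha
          have := FVR_substVar_subset N x x' ha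
          simp at this
          rw [or_comm] at this
          rcases this with ⟨h1', h2'⟩ | rfl
          · have haN : a ∈ FVR (.lam x N) := by
              rw [show FVR (.lam x N) = FVR N \ {x} from rfl]
              simp [h1', h2']
            exact keys_subset_insert _ _ _ (hc0.2 haN)
          · exact mem_keys_insert_self _ _ _
      obtain ⟨Φ₁, rfl, hd1, hc1, e2⟩ := ih2 (Φ₀.insert x' M₂) Finmap.insert_union hd0' hcc
      exact ⟨Φ₁, rfl, hd1, hc1, EvalR.app e1 hx'Φ₀ hx2 hx3 e2⟩
  | @varr k Θ x M Θ' V hlook h ih =>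
      intro Ψ hΘ hd hc
      subst hΘ
      have hxΨ : x ∈ Ψ := by
        have : x ∈ FVR (.var x) := by
          rw [show FVR (.var x) = {x} from rfl]; simp
        exact Finmap.mem_keys.mp (hc.2 this)
      have hlook' : Ψ.lookup x = some M := by
        rwa [Finmap.lookup_union_left hxΨ] at hlook
      have hdi : Ψ'.Disjoint (Ψ.insert x .bh) := by
        intro a ha hmem
        rcases Finmap.mem_insert.mp hmem with rfl | hmem
        · exact hd a ha hxΨ
        · exact hd a ha hmem
      have hcc : ConfigClosedR (Ψ.insert x .bh) M := by
        constructor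
        · intro y My hy
          by_cases hyx : y = x
          · subst hyx
            rw [Finmap.lookup_insert] at hy
            injection hy with hy
            subst hy
            rw [show FVR .bh = (∅ : Finset ℕ) from rfl]
            simp
          · rw [Finmap.lookup_insert_of_ne _ hyx] at hy
            exact (hc.1 y My hy).trans (keys_subset_insert _ _ _)
        · exact (hc.1 x M hlook').trans (keys_subset_insert _ _ _)
      obtain ⟨Φ₀, rfl, hd0, hc0, e⟩ := ih (Ψ.insert x .bh) Finmap.insert_union hdi hcc
      refine ⟨Φ₀.insert x V, Finmap.insert_union, ?_, ?_, EvalR.varr hlook' e⟩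
      · intro a ha hmem
        rcases Finmap.mem_insert.mp hmem with rfl | hmem
        · exact hd a ha hxΨ
        · exact hd0 a ha hmem
      · constructor
        · intro y My hy
          by_cases hyx : y = x
          · subst hyx
            rw [Finmap.lookup_insert] at hy
            injection hy with hy
            subst hy
            exact hc0.2.trans (keys_subset_insert _ _ _)
          · rw [Finmap.lookup_insert_of_ne _ hyx] at hy
            exact (hc0.1 y My hy).trans (keys_subset_insert _ _ _)
        · exact hc0.2.trans (keys_subset_insert _ _ _)
  | @letr k Θ ds N xs Θ' V hlen hnd hfresh h ih =>
      intro Ψ hΘ hd hc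
      subst hΘ
      have hmapfst : (List.zip xs (ds.map fun p => renameList (bindRen ds xs) p.2)).map
          Prod.fst = xs := List.map_fst_zip (by simp [hlen])
      have hbfst : (bindRen ds xs).map Prod.fst = ds.map Prod.fst :=
        List.map_fst_zip (by simp [hlen])
      have hbsnd : (bindRen ds xs).map Prod.snd = xs :=
        List.map_snd_zip (by simp [hlen])
      have hnotar : ∀ p ∈ bindRen ds xs, ∀ q ∈ bindRen ds xs, p.2 ≠ q.1 := by
        intro p hp q hq heq
        have hp2 : p.2 ∈ xs := by
          rw [← hbsnd]; exact List.mem_map_of_mem hp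
        have hq1 : q.1 ∈ ds.map Prod.fst := by
          rw [← hbfst]; exact List.mem_map_of_mem hq
        obtain ⟨_, _, _, h4⟩ := hfresh p.2 hp2
        exact h4 (by rw [heq]; exact List.mem_toFinset.mpr hq1)
      have hxsΨ' : ∀ x' ∈ xs, x' ∉ Ψ' := by
        intro x' hx' hm
        exact (hfresh x' hx').1
          (Finmap.mem_keys.mpr (Finmap.mem_union.mpr (Or.inr hm)))
      have hxsΨ : ∀ x' ∈ xs, x' ∉ Ψ.keys := by
        intro x' hx' hm
        exact (hfresh x' hx').1
          (Finmap.mem_keys.mpr (Finmap.mem_union.mpr (Or.inl (Finmap.mem_keys.mp hm))))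
      have hkeyin : ∀ a : ℕ, a ∈ Ψ.keys ∨ a ∈ xs →
          a ∈ (insertList Ψ
            (List.zip xs (ds.map fun p => renameList (bindRen ds xs) p.2))).keys := by
        intro a ha
        rw [Finmap.mem_keys, mem_insertList, hmapfst]
        rcases ha with ha | ha
        · exact Or.inl (Finmap.mem_keys.mp ha)
        · exact Or.inr ha
      have hbodysub : ∀ P : RExpr, FVR P ⊆ FVRL ds ∪ FVR N →
          FVR (renameList (bindRen ds xs) P) ⊆
            (insertList Ψ
              (List.zip xs (ds.map fun p => renameList (bindRen ds xs) p.2))).keys := by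
        intro P hP a ha
        have := FVR_renameList_subset (bindRen ds xs) P hnotar ha
        rw [hbfst, hbsnd] at this
        simp at this
        rcases this with ⟨h1', h2'⟩ | h1'
        · refine hkeyin a (Or.inl ?_)
          refine hc.2 ?_
          rw [show FVR (.letr ds N) = (FVRL ds ∪ FVR N) \ (ds.map Prod.fst).toFinset from rfl]
          simp [h2']
          simpa using hP h1'
        · exact hkeyin a (Or.inr h1')
      have hdi : Ψ'.Disjoint (insertList Ψ
          (List.zip xs (ds.map fun p => renameList (bindRen ds xs) p.2))) := by
        intro a ha hmem
        rw [mem_insertList, hmapfst] at hmem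
        rcases hmem with hmem | hmem
        · exact hd a ha hmem
        · exact hxsΨ' a hmem ha
      have hcc : ConfigClosedR (insertList Ψ
          (List.zip xs (ds.map fun p => renameList (bindRen ds xs) p.2)))
          (renameList (bindRen ds xs) N) := by
        constructor
        · intro y My hy
          rcases lookup_insertList _ _ _ _ hy with hy' | hy'
          · exact (hc.1 y My hy').trans (keys_subset_insertList _ _)
          · have := (List.of_mem_zip hy').2
            obtain ⟨p, hp, hpeq⟩ := List.mem_map.mp this
            subst hpeq
            refine hbodysub p.2 ?_
            intro a ha
            exact Finset.mem_union_left _ (mem_FVRL_of_mem ds p hp ha)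
        · refine hbodysub N ?_
          intro a ha
          exact Finset.mem_union_right _ ha
      obtain ⟨Φ₀, rfl, hd0, hc0, e⟩ := ih _ (insertList_union _ _ _) hdi hcc
      refine ⟨Φ₀, rfl, hd0, hc0, EvalR.letr hlen hnd ?_ e⟩
      intro x' hx'
      obtain ⟨_, h2', h3', h4'⟩ := hfresh x' hx'
      exact ⟨hxsΨ x' hx', h2', h3', h4'⟩
  | @errBeta k Θ M₁ M₂ Θ' h ih =>
      intro Ψ hΘ hd hc
      subst hΘ
      have hFV := FVR_app_subset hc.2
      obtain ⟨Φ₀, rfl, hd0, hc0, e⟩ := ih Ψ rfl hd ⟨hc.1, hFV.1⟩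
      refine ⟨Φ₀, rfl, hd0, ⟨hc0.1, ?_⟩, EvalR.errBeta e⟩
      rw [show FVR .bh = (∅ : Finset ℕ) from rfl]
      simp

end WeakenAux


/-- Heap-extension (weakening) lemma for the natural semantics of λ_letrec:
extending the heap with irrelevant bindings does not affect derivations, and
the derivations have the same depth. -/
theorem eval_heap_weakening
    (Ψ Ψ' Φ : RHeap) (M V : RExpr)
    (hΨ : Ψ.Disjoint Ψ') (hΦ : Ψ'.Disjoint Φ)
    (hc : ConfigClosedR Ψ M) (hc' : ConfigClosedR (Ψ ∪ Ψ') M) :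
    ∀ n : ℕ, EvalR n Ψ M Φ V ↔ EvalR n (Ψ ∪ Ψ') M (Φ ∪ Ψ') V := by
  intro n
  constructor
  · intro h
    exact h.weaken Ψ' hΦ
  · intro h
    obtain ⟨Φ₀, heq, hd0, _, e⟩ := h.strengthen Ψ' Ψ rfl (Finmap.Disjoint.symm _ _ hΨ) hc
    rwa [union_right_cancel hΦ hd0 heq]
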